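/- Let A be a totally unimodular n×m integer matrix with columns v_1,...,v_m ∈ ℤⁿ, let q ≥ 2 be an integer, and let a ∈ (1/q)ℤⁿ. Then there exists an integer vector x ∈ ℤⁿ such that |⟨a - x, v_j⟩| < 1 for all j = 1,...,m. -/
import Mathlib

private lemma abs_lt_one_of_floor_le {c : ℝ} {z : ℤ} (h1 : ⌊c⌋ ≤ z) (h2 : z ≤ ⌈c⌉) :
    |c - (z : ℝ)| < 1 := by
  rw [abs_sub_lt_iff]
  have h1' : (⌊c⌋ : ℝ) ≤ (z : ℝ) := by exact_mod_cast h1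
  have h2' : (z : ℝ) ≤ (⌈c⌉ : ℝ) := by exact_mod_cast h2
  constructor
  · linarith [Int.lt_floor_add_one c]
  · linarith [Int.ceil_lt_add_one c]

namespace TURound

open Module Submodule

variable {n : ℕ} {J : Type} [Fintype J]

/-- The rows of `N`, as real vectors. -/
def rr (N : Matrix J (Fin n) ℤ) (t : J) : Fin n → ℝ := fun i => (N t i : ℝ)

/-- Inner product of a row of `N` with a real vector. -/
def dotR (N : Matrix J (Fin n) ℤ) (t : J) (y : Fin n → ℝ) : ℝ :=
  ∑ i, (N t i : ℝ) * y i

/-- Feasibility: each inner product lies between floor and ceiling of the corresponding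
inner product of `a`. -/
def feas (N : Matrix J (Fin n) ℤ) (a y : Fin n → ℝ) : Prop :=
  ∀ t, ((⌊dotR N t a⌋ : ℝ) ≤ dotR N t y ∧ dotR N t y ≤ (⌈dotR N t a⌉ : ℝ))

/-- The set of tight constraints at `y`. -/
def tightSet (N : Matrix J (Fin n) ℤ) (a y : Fin n → ℝ) : Set J :=
  {t | dotR N t y = (⌊dotR N t a⌋ : ℝ) ∨ dotR N t y = (⌈dotR N t a⌉ : ℝ)}

/-- Span of the tight rows. -/
noncomputable def W (N : Matrix J (Fin n) ℤ) (a y : Fin n → ℝ) : Submodule ℝ (Fin n → ℝ) :=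
  Submodule.span ℝ (rr N '' tightSet N a y)

lemma integral_branch (N : Matrix J (Fin n) ℤ) (hN : N.IsTotallyUnimodular)
    (a y : Fin n → ℝ) (hfe : feas N a y) (hW : W N a y = ⊤) :
    ∃ x : Fin n → ℤ, y = fun i => (x i : ℝ) := by
  classical
  set T := tightSet N a y with hT
  have hzval : ∀ t ∈ T, ∃ z : ℤ, dotR N t y = (z : ℝ) := by
    intro t ht
    rcases ht with h | h
    exacts [⟨_, h⟩, ⟨_, h⟩]
  obtain ⟨s, hsub, hspan, hind⟩ := exists_linearIndependent ℝ (rr N '' T)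
  have hsfin : s.Finite := (Set.toFinite (rr N '' T)).subset hsub
  haveI : Fintype s := hsfin.fintype
  have hstop : Submodule.span ℝ s = ⊤ := by rw [hspan, ← hW]; rfl
  have hfr : finrank ℝ (Fin n → ℝ) = n := by
    rw [Module.finrank_pi]; simp
  have hcard : Fintype.card s = n := by
    have h1 := finrank_span_set_eq_card hind
    rw [hstop, finrank_top, hfr] at h1
    rw [← Set.toFinset_card, ← h1]
  let e : Fin n ≃ s := (Fintype.equivFinOfCardEq hcard).symm
  have hmem : ∀ p : Fin n, ((e p : Fin n → ℝ)) ∈ rr N '' T := fun p => hsub (e p).2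
  choose g hgT hgr using fun p => hmem p
  have hginj : Function.Injective g := by
    intro p q hpq
    have : ((e p : Fin n → ℝ)) = ((e q : Fin n → ℝ)) := by
      rw [← hgr p, ← hgr q, hpq]
    exact e.injective (Subtype.ext this)
  set B : Matrix (Fin n) (Fin n) ℤ := N.submatrix g id with hB
  have hdet : B.det ∈ Set.range SignType.cast := hN n g id hginj Function.injective_id
  set Bℝ : Matrix (Fin n) (Fin n) ℝ := B.map (fun z : ℤ => (z : ℝ)) with hBR
  have hrows : (fun p : Fin n => Bℝ p) = (fun x : s => (x : Fin n → ℝ)) ∘ e := by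
    funext p
    have := hgr p
    funext i
    exact congrFun this i
  have hli : LinearIndependent ℝ (fun p : Fin n => Bℝ p) := by
    rw [hrows]
    exact hind.comp e e.injective
  have hU : IsUnit Bℝ := Matrix.linearIndependent_rows_iff_isUnit.mp hli
  have hdetBR : Bℝ.det ≠ 0 := by
    intro h0
    rw [Matrix.isUnit_iff_isUnit_det, h0] at hU
    exact not_isUnit_zero hU
  have hdetcast : ((B.det : ℤ) : ℝ) = Bℝ.det := by
    exact RingHom.map_det (Int.castRingHom ℝ) B
  have hBdet : IsUnit B.det := by
    obtain ⟨sg, hsg⟩ := hdet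
    cases sg with
    | zero =>
      exfalso; apply hdetBR
      rw [← hdetcast, ← hsg]; simp
    | pos => rw [← hsg]; simp
    | neg => rw [← hsg]; simp
  have hz : ∀ p, ∃ z : ℤ, dotR N (g p) y = (z : ℝ) := fun p => hzval (g p) (hgT p)
  choose z hzv using hz
  refine ⟨B⁻¹.mulVec z, ?_⟩
  have hBx : B.mulVec (B⁻¹.mulVec z) = z := by
    rw [Matrix.mulVec_mulVec, Matrix.mul_nonsing_inv _ hBdet, Matrix.one_mulVec]
  have hinj : Function.Injective Bℝ.mulVec := Matrix.mulVec_injective_iff_isUnit.mpr hU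
  apply hinj
  funext p
  have h1 : Bℝ.mulVec y p = (z p : ℝ) := by
    rw [← hzv]
    simp only [Matrix.mulVec, dotProduct, hBR, hB, Matrix.map_apply,
      Matrix.submatrix_apply, id_eq, dotR]
  have h2 : Bℝ.mulVec (fun i => ((B⁻¹.mulVec z) i : ℝ)) p = (z p : ℝ) := by
    have := congrFun hBx p
    simp only [Matrix.mulVec, dotProduct] at this ⊢
    push_cast
    rw [← this]
    push_cast
    rfl
  rw [h1, h2]

lemma step (N : Matrix J (Fin n) ℤ) (a y : Fin n → ℝ) (hfe : feas N a y)
    (hE : ∀ i : Fin n, ∃ t : J, N t = fun i' => if i = i' then 1 else 0)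
    (hW : W N a y ≠ ⊤) :
    ∃ y' : Fin n → ℝ, feas N a y' ∧ W N a y < W N a y' := by
  classical
  obtain ⟨f, hf0, hfbot⟩ :=
    Submodule.exists_dual_map_eq_bot_of_lt_top (lt_top_iff_ne_top.mpr hW) inferInstance
  have hker : ∀ w ∈ W N a y, f w = 0 := by
    intro w hw
    have : f w ∈ (W N a y).map f := Submodule.mem_map_of_mem hw
    rwa [hfbot, Submodule.mem_bot] at this
  set d : Fin n → ℝ := fun i => f (fun j => if i = j then 1 else 0) with hd
  have hfd : ∀ u : Fin n → ℝ, f u = ∑ i, u i * d i := by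
    intro u
    rw [LinearMap.pi_apply_eq_sum_univ f u]
    simp [hd, smul_eq_mul]
  have hDdot : ∀ t, dotR N t d = f (rr N t) := by
    intro t
    rw [hfd (rr N t)]
    rfl
  have htightD : ∀ t ∈ tightSet N a y, dotR N t d = 0 := by
    intro t ht
    rw [hDdot]
    exact hker _ (Submodule.subset_span (Set.mem_image_of_mem _ ht))
  have hdne : ∃ i, d i ≠ 0 := by
    by_contra hcon
    push_neg at hcon
    refine hf0 (LinearMap.ext fun u => ?_)
    rw [hfd]
    simp [hcon]
  obtain ⟨i0, hi0⟩ := hdne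
  obtain ⟨t0, ht0⟩ := hE i0
  have hDt0 : dotR N t0 d = d i0 := by
    simp [dotR, ht0, ite_mul, Finset.sum_ite_eq]
  set S : Finset J := Finset.univ.filter (fun t => dotR N t d ≠ 0) with hSdef
  have hS : S.Nonempty := ⟨t0, by simp [hSdef, hDt0, hi0]⟩
  have hmemS : ∀ t, t ∈ S ↔ dotR N t d ≠ 0 := by
    intro t; simp [hSdef]
  have hstrict : ∀ t ∈ S, (⌊dotR N t a⌋ : ℝ) < dotR N t y ∧ dotR N t y < (⌈dotR N t a⌉ : ℝ) := by
    intro t ht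
    have hnt : t ∉ tightSet N a y := fun h => (hmemS t).mp ht (htightD t h)
    exact ⟨lt_of_le_of_ne (hfe t).1 (fun h => hnt (Or.inl h.symm)),
      lt_of_le_of_ne (hfe t).2 (fun h => hnt (Or.inr h))⟩
  set bound : J → ℝ := fun t =>
    if 0 < dotR N t d then ((⌈dotR N t a⌉ : ℝ) - dotR N t y) / dotR N t d
    else ((⌊dotR N t a⌋ : ℝ) - dotR N t y) / dotR N t d with hbd
  have hbpos : ∀ t ∈ S, 0 < bound t := by
    intro t ht
    by_cases hpos : 0 < dotR N t d
    · rw [hbd]; simp only [if_pos hpos]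
      exact div_pos (by linarith [(hstrict t ht).2]) hpos
    · have hneg : dotR N t d < 0 := ((hmemS t).mp ht).lt_of_le (not_lt.mp hpos)
      rw [hbd]; simp only [if_neg hpos]
      exact div_pos_of_neg_of_neg (by linarith [(hstrict t ht).1]) hneg
  set ts : ℝ := S.inf' hS bound with hts
  have htspos : 0 < ts := by
    rw [hts, Finset.lt_inf'_iff]
    exact hbpos
  set y' : Fin n → ℝ := fun i => y i + ts * d i with hy'
  have hdot' : ∀ t, dotR N t y' = dotR N t y + ts * dotR N t d := by
    intro t
    have hterm : ∀ i, (N t i : ℝ) * (y i + ts * d i)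
        = (N t i : ℝ) * y i + ts * ((N t i : ℝ) * d i) := fun i => by ring
    simp only [dotR, hy', hterm, Finset.sum_add_distrib, ← Finset.mul_sum]
  refine ⟨y', ?_, ?_⟩
  · intro t
    by_cases hDt : dotR N t d = 0
    · rw [hdot' t, hDt, mul_zero, add_zero]
      exact hfe t
    · have htS : t ∈ S := (hmemS t).mpr hDt
      have htsle : ts ≤ bound t := Finset.inf'_le _ htS
      rcases Ne.lt_or_gt hDt with hneg | hpos
      · have hbb : bound t = ((⌊dotR N t a⌋ : ℝ) - dotR N t y) / dotR N t d := by
          rw [hbd]; simp only [if_neg (not_lt.mpr hneg.le)]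
        have h1 : bound t * dotR N t d = (⌊dotR N t a⌋ : ℝ) - dotR N t y := by
          rw [hbb, div_mul_cancel₀ _ hDt]
        have h2 : bound t * dotR N t d ≤ ts * dotR N t d :=
          mul_le_mul_of_nonpos_right htsle hneg.le
        have h3 : ts * dotR N t d < 0 := mul_neg_of_pos_of_neg htspos hneg
        rw [hdot' t]
        constructor
        · linarith
        · linarith [(hfe t).2]
      · have hbb : bound t = ((⌈dotR N t a⌉ : ℝ) - dotR N t y) / dotR N t d := by
          rw [hbd]; simp only [if_pos hpos]
        have h1 : bound t * dotR N t d = (⌈dotR N t a⌉ : ℝ) - dotR N t y := by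
          rw [hbb, div_mul_cancel₀ _ hDt]
        have h2 : ts * dotR N t d ≤ bound t * dotR N t d :=
          mul_le_mul_of_nonneg_right htsle hpos.le
        have h3 : 0 < ts * dotR N t d := mul_pos htspos hpos
        rw [hdot' t]
        constructor
        · linarith [(hfe t).1]
        · linarith
  · have htsub : tightSet N a y ⊆ tightSet N a y' := by
      intro t ht
      have hD0 := htightD t ht
      have : dotR N t y' = dotR N t y := by rw [hdot' t, hD0, mul_zero, add_zero]
      rcases ht with h | h
      · exact Or.inl (by rw [this]; exact h)
      · exact Or.inr (by rw [this]; exact h)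
    obtain ⟨t1, ht1S, ht1⟩ := Finset.exists_mem_eq_inf' hS bound
    have hDt1 : dotR N t1 d ≠ 0 := (hmemS t1).mp ht1S
    have ht1tight : t1 ∈ tightSet N a y' := by
      rcases Ne.lt_or_gt hDt1 with hneg | hpos
      · left
        rw [hdot' t1, hts, ht1]
        have hbb : bound t1 = ((⌊dotR N t1 a⌋ : ℝ) - dotR N t1 y) / dotR N t1 d := by
          rw [hbd]; simp only [if_neg (not_lt.mpr hneg.le)]
        rw [hbb, div_mul_cancel₀ _ hDt1]
        ring
      · right
        rw [hdot' t1, hts, ht1]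
        have hbb : bound t1 = ((⌈dotR N t1 a⌉ : ℝ) - dotR N t1 y) / dotR N t1 d := by
          rw [hbd]; simp only [if_pos hpos]
        rw [hbb, div_mul_cancel₀ _ hDt1]
        ring
    have hnotin : rr N t1 ∉ W N a y := by
      intro hmem
      exact hDt1 (by rw [hDdot]; exact hker _ hmem)
    have hle : W N a y ≤ W N a y' :=
      Submodule.span_mono (Set.image_mono htsub)
    have hmem' : rr N t1 ∈ W N a y' :=
      Submodule.subset_span (Set.mem_image_of_mem _ ht1tight)
    exact lt_of_le_of_ne hle (fun h => hnotin (by rw [h]; exact hmem'))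

lemma key (N : Matrix J (Fin n) ℤ) (hN : N.IsTotallyUnimodular)
    (hE : ∀ i : Fin n, ∃ t : J, N t = fun i' => if i = i' then 1 else 0)
    (a : Fin n → ℝ) :
    ∀ k : ℕ, ∀ y : Fin n → ℝ, feas N a y → n ≤ k + finrank ℝ (W N a y) →
      ∃ x : Fin n → ℤ, feas N a (fun i => (x i : ℝ)) := by
  intro k
  induction k with
  | zero =>
    intro y hy hrank
    have hfr : finrank ℝ (Fin n → ℝ) = n := by rw [Module.finrank_pi]; simp
    have heq : finrank ℝ (W N a y) = finrank ℝ (Fin n → ℝ) := by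
      refine le_antisymm (Submodule.finrank_le _) ?_
      rw [hfr]; omega
    obtain ⟨x, hx⟩ := integral_branch N hN a y hy (Submodule.eq_top_of_finrank_eq heq)
    exact ⟨x, hx ▸ hy⟩
  | succ k ih =>
    intro y hy hrank
    by_cases hWtop : W N a y = ⊤
    · obtain ⟨x, hx⟩ := integral_branch N hN a y hy hWtop
      exact ⟨x, hx ▸ hy⟩
    · obtain ⟨y', hy', hlt⟩ := step N a y hy hE hWtop
      have hfin := Submodule.finrank_lt_finrank_of_lt hlt
      exact ih y' hy' (by omega)

end TURound

/-- If the columns `v 1, ..., v m ∈ ℤⁿ` form a totally unimodular matrix,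
`q ≥ 2`, and `a ∈ (1/q)ℤⁿ`, then there is `x ∈ ℤⁿ` with `|⟨a - x, v j⟩| < 1` for all `j`. -/
theorem stmt0 (n m : ℕ) (v : Fin m → Fin n → ℤ)
    (hTU : (Matrix.of fun (i : Fin n) (j : Fin m) => v j i).IsTotallyUnimodular)
    (q : ℕ) (hq : 2 ≤ q) (a : Fin n → ℝ) (ha : ∀ i, ∃ k : ℤ, a i = (k : ℝ) / q) :
    ∃ x : Fin n → ℤ, ∀ j, |∑ i, (a i - (x i : ℝ)) * (v j i : ℝ)| < 1 := by
  classical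
  set M : Matrix (Fin n) (Fin m) ℤ := Matrix.of fun (i : Fin n) (j : Fin m) => v j i with hM
  set N : Matrix (Fin m ⊕ Fin n) (Fin n) ℤ := Matrix.fromRows M.transpose (1 : Matrix (Fin n) (Fin n) ℤ) with hNdef
  have hN : N.IsTotallyUnimodular := hTU.transpose.fromRows_one
  have hE : ∀ i : Fin n, ∃ t : Fin m ⊕ Fin n, N t = fun i' => if i = i' then 1 else 0 := by
    intro i
    refine ⟨Sum.inr i, funext fun i' => ?_⟩
    simp [hNdef, Matrix.one_apply]
  have hrow : ∀ j i, N (Sum.inl j) i = v j i := by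
    intro j i
    simp [hNdef, hM]
  have hfeas_a : TURound.feas N a a := fun t => ⟨Int.floor_le _, Int.le_ceil _⟩
  obtain ⟨x, hx⟩ := TURound.key N hN hE a n a hfeas_a (Nat.le_add_right _ _)
  refine ⟨x, fun j => ?_⟩
  have h := hx (Sum.inl j)
  set c : ℝ := TURound.dotR N (Sum.inl j) a with hc
  have hcval : c = ∑ i, (v j i : ℝ) * a i := by
    rw [hc]
    unfold TURound.dotR
    exact Finset.sum_congr rfl fun i _ => by rw [hrow]
  set z : ℤ := ∑ i, v j i * x i with hz
  have hdotz : TURound.dotR N (Sum.inl j) (fun i => (x i : ℝ)) = (z : ℝ) := by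
    unfold TURound.dotR
    rw [hz]
    push_cast
    exact Finset.sum_congr rfl fun i _ => by rw [hrow]
  rw [hdotz] at h
  have h1 : ⌊c⌋ ≤ z := by exact_mod_cast h.1
  have h2 : z ≤ ⌈c⌉ := by exact_mod_cast h.2
  have habs := abs_lt_one_of_floor_le h1 h2
  have heq : ∑ i, (a i - (x i : ℝ)) * (v j i : ℝ) = c - (z : ℝ) := by
    rw [hcval, hz]
    push_cast
    rw [← Finset.sum_sub_distrib]
    exact Finset.sum_congr rfl fun i _ => by ring
  rw [heq]
  exact habs
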